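/- Let n ≥ 1, ℓ ≥ 0, d be integers and x = (d+ℓ)/(n+1) ∈ ℤ. There exists a surjective map of sheaves O_{ℙ¹}^{⊕n} ⊕ O_{ℙ¹}(ℓ) → O_{ℙ¹}(x) if and only if: (x ≥ 0 when n ≥ 2), and (x = 0 or x ≥ ℓ when n = 1). Equivalently in terms of d: d ≥ −ℓ when n ≥ 2, and d = −ℓ or d ≥ nℓ when n = 1. -/

import Mathlib

open MvPolynomial

lemma homog_exists_zero (k : ℕ) (hk : 0 < k) (f : MvPolynomial (Fin 2) ℂ)
    (hf : f.IsHomogeneous k) :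
    ∃ u v : ℂ, (u ≠ 0 ∨ v ≠ 0) ∧ eval ![u, v] f = 0 := by
  by_cases h10 : eval ![(1:ℂ), 0] f = 0
  · exact ⟨1, 0, Or.inl one_ne_zero, h10⟩
  have hdeg : ∀ d ∈ f.support, d 0 + d 1 = k := by
    intro d hd
    have h1 : (Finsupp.weight (1 : Fin 2 → ℕ)) d = k := hf (mem_support_iff.mp hd)
    have h2 : d.degree = k := by rw [Finsupp.degree_eq_weight_one]; exact h1
    have h3 : d.degree = d 0 + d 1 := by
      rw [Finsupp.degree_apply]
      rw [Finset.sum_subset (Finset.subset_univ d.support)]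
      · exact Fin.sum_univ_two d
      · intro i _ hi; simpa using hi
    omega
  set P : Polynomial ℂ := aeval ![Polynomial.X, 1] f with hP
  have hPsum : P = ∑ d ∈ f.support,
      Polynomial.C (coeff d f) * Polynomial.X ^ d 0 := by
    rw [hP, aeval_def, eval₂_eq']
    refine Finset.sum_congr rfl fun d hd => ?_
    rw [Fin.prod_univ_two]
    simp [Algebra.algebraMap_self]
  have hck : P.coeff k = eval ![(1:ℂ), 0] f := by
    rw [hPsum, Polynomial.finset_sum_coeff, eval_eq']
    refine Finset.sum_congr rfl fun d hd => ?_
    rw [Polynomial.coeff_C_mul, Polynomial.coeff_X_pow, Fin.prod_univ_two]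
    have := hdeg d hd
    simp only [Matrix.cons_val_zero, Matrix.cons_val_one, Matrix.head_cons, one_pow, one_mul]
    by_cases h : k = d 0
    · have : d 1 = 0 := by omega
      simp [h, this]
    · have : d 1 ≠ 0 := by omega
      simp [h, zero_pow this]
  have hne : P.coeff k ≠ 0 := by rw [hck]; exact h10
  have hdegP : 0 < P.degree := by
    have := Polynomial.le_natDegree_of_ne_zero hne
    exact Polynomial.natDegree_pos_iff_degree_pos.mp (by omega)
  obtain ⟨t, ht⟩ := Complex.exists_root hdegP
  refine ⟨t, 1, Or.inr one_ne_zero, ?_⟩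
  have hcomp := comp_aeval_apply (f := (![Polynomial.X, 1] : Fin 2 → Polynomial ℂ))
    (φ := (Polynomial.aeval t : Polynomial ℂ →ₐ[ℂ] ℂ)) f
  have h1 : (fun i => Polynomial.aeval t ((![Polynomial.X, 1] : Fin 2 → Polynomial ℂ) i))
      = ![t, 1] := by
    funext i
    fin_cases i <;> simp
  rw [h1] at hcomp
  have h2 : Polynomial.aeval t P = 0 := by
    rw [Polynomial.aeval_def]
    simpa using ht
  rw [hcomp] at h2
  rw [← coe_aeval_eq_eval]
  exact h2

/- STATEMENT 6: a map O_{ℙ¹}^{⊕n} ⊕ O_{ℙ¹}(ℓ) → O_{ℙ¹}(x) is given by n homogeneous forms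
f i of degree x and one homogeneous form g of degree x − ℓ in two variables (a form of
negative degree being 0); it is surjective iff the forms have no common zero on ℙ¹.
Claim: such a surjection exists iff (x ≥ 0 when n ≥ 2) and (x = 0 or x ≥ ℓ when n = 1);
equivalently, in terms of d with d + ℓ = (n+1)x: d ≥ −ℓ when n ≥ 2, and d = −ℓ or d ≥ nℓ
when n = 1. -/
theorem stmt6 (n : ℕ) (hn : 1 ≤ n) (ℓ d x : ℤ) (hl : 0 ≤ ℓ)
    (hx : d + ℓ = (n + 1) * x) :
    ((∃ (f : Fin n → MvPolynomial (Fin 2) ℂ) (g : MvPolynomial (Fin 2) ℂ),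
        (∀ i, (f i).IsHomogeneous x.toNat) ∧ (x < 0 → ∀ i, f i = 0) ∧
        g.IsHomogeneous (x - ℓ).toNat ∧ (x - ℓ < 0 → g = 0) ∧
        (∀ u v : ℂ, (u ≠ 0 ∨ v ≠ 0) →
          (∃ i, eval ![u, v] (f i) ≠ 0) ∨ eval ![u, v] g ≠ 0)) ↔
      ((2 ≤ n → 0 ≤ x) ∧ (n = 1 → x = 0 ∨ ℓ ≤ x))) ∧
    (((2 ≤ n → 0 ≤ x) ∧ (n = 1 → x = 0 ∨ ℓ ≤ x)) ↔
      ((2 ≤ n → -ℓ ≤ d) ∧ (n = 1 → d = -ℓ ∨ (n : ℤ) * ℓ ≤ d))) := by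
  have key : ∀ u v : ℂ, ¬(u = 0 ∧ v = 0) → (u ≠ 0 ∨ v ≠ 0) := by tauto
  constructor
  · constructor
    · rintro ⟨f, g, hfh, hfneg, hgh, hgneg, hnz⟩
      have hx0 : 0 ≤ x := by
        by_contra h
        push_neg at h
        have hf0 := hfneg h
        have hg0 := hgneg (by omega)
        rcases hnz 1 0 (Or.inl one_ne_zero) with ⟨i, hi⟩ | hg'
        · rw [hf0 i] at hi; simp at hi
        · rw [hg0] at hg'; simp at hg'
      refine ⟨fun _ => hx0, fun h1 => ?_⟩
      by_contra hcon
      push_neg at hcon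
      obtain ⟨hxne, hxl⟩ := hcon
      have hg0 : g = 0 := hgneg (by omega)
      subst h1
      have hk : 0 < x.toNat := by omega
      obtain ⟨u, v, huv, hz⟩ := homog_exists_zero _ hk (f 0) (hfh 0)
      rcases hnz u v huv with ⟨i, hi⟩ | hgn
      · rw [Subsingleton.elim i 0, hz] at hi; exact hi rfl
      · rw [hg0] at hgn; simp at hgn
    · rintro ⟨h2, h1⟩
      by_cases hcase : n = 1
      · rcases h1 hcase with hx0 | hlx
        · refine ⟨fun _ => 1, 0, fun i => ?_, fun h => by omega, ?_, fun _ => rfl, ?_⟩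
          · have : x.toNat = 0 := by omega
            rw [this]; exact isHomogeneous_one _ _
          · exact isHomogeneous_zero _ _ _
          · intro u v _; left; exact ⟨⟨0, by omega⟩, by simp⟩
        · have hx0 : 0 ≤ x := le_trans hl hlx
          refine ⟨fun _ => X 0 ^ x.toNat, X 1 ^ (x - ℓ).toNat,
            fun i => _root_.MvPolynomial.isHomogeneous_X_pow _ _, fun h => by omega,
            _root_.MvPolynomial.isHomogeneous_X_pow _ _, fun h => by omega, ?_⟩
          intro u v huv
          rcases huv with hu | hv
          · left
            exact ⟨⟨0, by omega⟩, by simp [pow_ne_zero _ hu]⟩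
          · right
            simp [pow_ne_zero _ hv]
      · have hn2 : 2 ≤ n := by omega
        have hx0 : 0 ≤ x := h2 hn2
        refine ⟨fun i => if (i : ℕ) = 0 then X 0 ^ x.toNat else X 1 ^ x.toNat, 0,
          fun i => ?_, fun h => by omega, isHomogeneous_zero _ _ _, fun _ => rfl, ?_⟩
        · by_cases hi : (i : ℕ) = 0 <;> simp [hi, _root_.MvPolynomial.isHomogeneous_X_pow]
        · intro u v huv
          left
          rcases huv with hu | hv
          · exact ⟨⟨0, by omega⟩, by simp [pow_ne_zero _ hu]⟩
          · exact ⟨⟨1, by omega⟩, by simp [pow_ne_zero _ hv]⟩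
  · have hn1 : (0:ℤ) < (n : ℤ) + 1 := by positivity
    constructor
    · rintro ⟨h2, h1⟩
      constructor
      · intro hn2
        have hx0 := h2 hn2
        nlinarith
      · intro hne1
        subst hne1
        rcases h1 rfl with h | h
        · left; push_cast at hx; omega
        · right; push_cast at hx ⊢; omega
    · rintro ⟨h2, h1⟩
      constructor
      · intro hn2
        have hd := h2 hn2
        nlinarith
      · intro hne1
        subst hne1
        rcases h1 rfl with h | h
        · left; push_cast at hx; omega
        · right; push_cast at hx h; omega
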